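/- Let e₁, e₂, e₃, e₄ ∈ S^2 and z₁, z₂, z₃, z₄ ∈ C^4 be unit vectors, set θ_{jk} = θ(e_j, e_k) and φ = min{θ₁₃, θ₁₄, θ₂₃, θ₂₄}. Then the quadrilinear quantity q = Σ_{μ=0}^3 ⟨α^μ Π(e₁)z₁, Π(e₂)z₂⟩⟨α_μ Π(e₃)z₃, Π(e₄)z₄⟩ satisfies |q| ≲ θ₁₂θ₃₄ + φ·max(θ₁₂, θ₃₄) + φ², with an absolute implicit constant. -/

import Mathlib

noncomputable section

open InnerProductGeometry

abbrev E3 := EuclideanSpace ℝ (Fin 3)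
abbrev C4 := EuclideanSpace ℂ (Fin 4)

/-- The 4×4 Dirac matrices `α¹, α², α³`, built from the Pauli matrices. -/
def diracAlpha : Fin 3 → Matrix (Fin 4) (Fin 4) ℂ
  | 0 => !![0,0,0,1; 0,0,1,0; 0,1,0,0; 1,0,0,0]
  | 1 => !![0,0,0,-Complex.I; 0,0,Complex.I,0; 0,-Complex.I,0,0; Complex.I,0,0,0]
  | 2 => !![0,0,1,0; 0,0,0,-1; 1,0,0,0; 0,-1,0,0]

/-- The Dirac projection `Π(ξ) = (1/2)(I + ξ^j α_j / |ξ|)`. -/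
def diracPi (ξ : E3) : Matrix (Fin 4) (Fin 4) ℂ :=
  (1/2 : ℂ) • ((1 : Matrix (Fin 4) (Fin 4) ℂ) +
    (‖ξ‖⁻¹ : ℝ) • ∑ j : Fin 3, (ξ j : ℂ) • diracAlpha j)

namespace DiracAux

open Matrix

set_option maxHeartbeats 1000000

abbrev Mx := Matrix (Fin 4) (Fin 4) ℂ

/-- `S(v) = v^j α_j`. -/
def Sm (v : E3) : Mx := ∑ j : Fin 3, (v j : ℂ) • diracAlpha j

lemma alpha_herm (j : Fin 3) : (diracAlpha j)ᴴ = diracAlpha j := by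
  fin_cases j <;> ext i k <;> fin_cases i <;> fin_cases k <;>
    simp [diracAlpha, Matrix.conjTranspose_apply, Matrix.vecHead, Matrix.vecTail]

lemma Sm_herm (v : E3) : (Sm v)ᴴ = Sm v := by
  simp [Sm, Matrix.conjTranspose_sum, Matrix.conjTranspose_smul, alpha_herm,
    Complex.conj_ofReal]

lemma Sm_sub (u v : E3) : Sm (u - v) = Sm u - Sm v := by
  simp only [Sm, ← Finset.sum_sub_distrib, ← sub_smul]
  refine Finset.sum_congr rfl fun j _ => ?_
  rw [PiLp.sub_apply]
  push_cast
  ring_nf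

lemma Sm_eq (v : E3) : Sm v =
    !![0, 0, (v 2 : ℂ), (v 0 : ℂ) - Complex.I * (v 1 : ℂ);
       0, 0, (v 0 : ℂ) + Complex.I * (v 1 : ℂ), -(v 2 : ℂ);
       (v 2 : ℂ), (v 0 : ℂ) - Complex.I * (v 1 : ℂ), 0, 0;
       (v 0 : ℂ) + Complex.I * (v 1 : ℂ), -(v 2 : ℂ), 0, 0] := by
  ext i k
  simp only [Sm, Fin.sum_univ_three]
  fin_cases i <;> fin_cases k <;>
    simp [diracAlpha, Matrix.add_apply, Matrix.smul_apply, Matrix.vecHead, Matrix.vecTail] <;>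
    ring

lemma Sm_mul_Sm (u v : E3) :
    Sm u * Sm v + Sm v * Sm u = ((2 * (u 0 * v 0 + u 1 * v 1 + u 2 * v 2) : ℝ) : ℂ) • 1 := by
  rw [Sm_eq u, Sm_eq v]
  ext i k
  fin_cases i <;> fin_cases k <;>
    simp [Matrix.mul_apply, Fin.sum_univ_four, Matrix.one_apply,
      Matrix.add_apply, Matrix.smul_apply, Matrix.vecHead, Matrix.vecTail] <;>
    push_cast <;> ring_nf <;> simp [Complex.I_sq] <;> ring_nf

lemma inner_eq_sum (u v : E3) : (inner ℝ u v : ℝ) = u 0 * v 0 + u 1 * v 1 + u 2 * v 2 := by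
  simp [PiLp.inner_apply, Fin.sum_univ_three]
  ring

lemma Sm_mul_Sm' (u v : E3) :
    Sm u * Sm v + Sm v * Sm u = ((2 * (inner ℝ u v : ℝ) : ℝ) : ℂ) • 1 := by
  rw [Sm_mul_Sm, inner_eq_sum]

lemma Sm_sq (v : E3) : Sm v * Sm v = ((‖v‖ ^ 2 : ℝ) : ℂ) • 1 := by
  have h := Sm_mul_Sm' v v
  rw [real_inner_self_eq_norm_sq] at h
  have h2 : (2 : ℂ) • (Sm v * Sm v) = (2 : ℂ) • (((‖v‖ ^ 2 : ℝ) : ℂ) • 1) := by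
    rw [two_smul, smul_smul]
    convert h using 2
    push_cast; ring
  exact smul_right_injective _ (by norm_num) h2

lemma Sm_single (j : Fin 3) : Sm (EuclideanSpace.single j 1) = diracAlpha j := by
  simp [Sm, EuclideanSpace.single_apply]

lemma alpha_Sm_anticomm (j : Fin 3) (v : E3) :
    diracAlpha j * Sm v + Sm v * diracAlpha j = ((2 * v j : ℝ) : ℂ) • 1 := by
  have h := Sm_mul_Sm' (EuclideanSpace.single j 1) v
  rw [Sm_single] at h
  rw [h]
  congr 2
  rw [real_inner_comm, EuclideanSpace.inner_single_right]
  simp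

/-- `Π(e)` for a unit vector, in terms of `Sm`. -/
def Pm (e : E3) : Mx := (1/2 : ℂ) • (1 + Sm e)

lemma diracPi_eq {e : E3} (he : ‖e‖ = 1) : diracPi e = Pm e := by
  rw [diracPi, Pm, he]
  norm_num
  rfl

lemma Pm_herm (e : E3) : (Pm e)ᴴ = Pm e := by
  rw [Pm]
  rw [Matrix.conjTranspose_smul, Matrix.conjTranspose_add, Matrix.conjTranspose_one, Sm_herm]
  norm_num

lemma Pm_idem {e : E3} (he : ‖e‖ = 1) : Pm e * Pm e = Pm e := by
  have hs := Sm_sq e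
  rw [he] at hs; norm_num at hs
  have key : (1 + Sm e) * (1 + Sm e) = (2 : ℂ) • (1 + Sm e) := by
    rw [mul_add, mul_one, add_mul, one_mul, hs]
    module
  rw [Pm, Matrix.smul_mul, Matrix.mul_smul, key, smul_smul, smul_smul]
  norm_num

lemma Sm_sub_one_mul_Pm {e : E3} (he : ‖e‖ = 1) : (Sm e - 1) * Pm e = 0 := by
  have hs := Sm_sq e
  rw [he] at hs; norm_num at hs
  rw [Pm, Matrix.mul_smul, sub_mul, mul_add, mul_add, hs, mul_one, one_mul, one_mul]
  rw [show Sm e + (1 : Mx) - (1 + Sm e) = 0 by abel, smul_zero]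

lemma contraction {e : E3} (he : ‖e‖ = 1) (h : E3) :
    (Sm h - 1) * Pm e = Sm (h - e) * Pm e := by
  have : Sm h - 1 = (Sm (h - e)) + (Sm e - 1) := by rw [Sm_sub]; abel
  rw [this, add_mul, Sm_sub_one_mul_Pm he, add_zero]

lemma PAP {e : E3} (he : ‖e‖ = 1) (j : Fin 3) :
    Pm e * diracAlpha j * Pm e = ((e j : ℝ) : ℂ) • Pm e := by
  have hs := Sm_sq e
  rw [he] at hs; norm_num at hs
  have hA := alpha_Sm_anticomm j e
  have hA' : Sm e * diracAlpha j = ((2 * e j : ℝ) : ℂ) • 1 - diracAlpha j * Sm e := by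
    rw [← hA]; abel
  have e1 : Sm e * diracAlpha j * Sm e = ((2 * e j : ℝ) : ℂ) • Sm e - diracAlpha j := by
    rw [hA', sub_mul, Matrix.smul_mul, one_mul, mul_assoc, hs, mul_one]
  have key : (1 + Sm e) * diracAlpha j * (1 + Sm e)
      = ((2 * e j : ℝ) : ℂ) • (1 + Sm e) := by
    have expand : (1 + Sm e) * diracAlpha j * (1 + Sm e)
        = diracAlpha j + diracAlpha j * Sm e + (Sm e * diracAlpha j + Sm e * diracAlpha j * Sm e) := by
      simp only [add_mul, mul_add, one_mul, mul_one]
      abel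
    rw [expand, e1, hA']
    module
  rw [Pm, Matrix.smul_mul, Matrix.mul_smul, Matrix.smul_mul, key, smul_smul, smul_smul,
    smul_smul]
  congr 1
  push_cast
  ring

end DiracAux

namespace DiracAux

open Matrix

local notation "⟪" x ", " y "⟫" => @inner ℂ C4 _ x y

abbrev L (M : Mx) : C4 →ₗ[ℂ] C4 := Matrix.toEuclideanLin M

lemma L_mul (M N : Mx) (z : C4) : L (M * N) z = L M (L N z) := by
  simp only [L, Matrix.toEuclideanLin_apply]
  simp [Matrix.mulVec_mulVec]

lemma inner_L_left (M : Mx) (x y : C4) : ⟪L M x, y⟫ = ⟪x, L Mᴴ y⟫ := by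
  rw [L, L, Matrix.toEuclideanLin_conjTranspose_eq_adjoint, LinearMap.adjoint_inner_right]

lemma inner_L_right (M : Mx) (x y : C4) : ⟪x, L M y⟫ = ⟪L Mᴴ x, y⟫ := by
  rw [inner_L_left, Matrix.conjTranspose_conjTranspose]

lemma L_one (z : C4) : L 1 z = z := by
  rw [L, Matrix.toEuclideanLin_eq_toLin, Matrix.toLin_one]; rfl

lemma norm_L_eq (M : Mx) (b : ℝ) (hb : 0 ≤ b)
    (h : Mᴴ * M = ((b ^ 2 : ℝ) : ℂ) • 1) (z : C4) : ‖L M z‖ = b * ‖z‖ := by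
  have h1 : ⟪L M z, L M z⟫ = ((b ^ 2 : ℝ) : ℂ) * ⟪z, z⟫ := by
    have hL : L (((b ^ 2 : ℝ) : ℂ) • (1 : Mx)) z = ((b ^ 2 : ℝ) : ℂ) • z := by
      simp [L, Matrix.toEuclideanLin_apply, Matrix.smul_mulVec, Matrix.one_mulVec]
    rw [inner_L_left, ← L_mul, h, hL, inner_smul_right]
  have h2 : (‖L M z‖ ^ 2 : ℝ) = (b * ‖z‖) ^ 2 := by
    have a1 : RCLike.re ⟪L M z, L M z⟫ = ‖L M z‖ ^ 2 := inner_self_eq_norm_sq _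
    have a2 : RCLike.re ⟪z, z⟫ = ‖z‖ ^ 2 := inner_self_eq_norm_sq _
    rw [h1] at a1
    simp only [RCLike.re_to_complex] at a1 a2
    rw [Complex.re_ofReal_mul, a2] at a1
    rw [mul_pow, ← a1]
  rw [← Real.sqrt_sq (norm_nonneg (L M z)), h2, Real.sqrt_sq (by positivity)]

lemma alpha_sq (j : Fin 3) : diracAlpha j * diracAlpha j = 1 := by
  rw [← Sm_single j, Sm_sq]
  simp [EuclideanSpace.norm_single]

lemma norm_L_Sm (v : E3) (z : C4) : ‖L (Sm v) z‖ = ‖v‖ * ‖z‖ := by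
  refine norm_L_eq _ _ (norm_nonneg v) ?_ z
  rw [Sm_herm, Sm_sq]

lemma norm_L_alpha (j : Fin 3) (z : C4) : ‖L (diracAlpha j) z‖ = ‖z‖ := by
  have := norm_L_eq (diracAlpha j) 1 zero_le_one ?_ z
  · simpa using this
  · rw [alpha_herm, alpha_sq]; norm_num

lemma norm_L_P_le {e : E3} (he : ‖e‖ = 1) (z : C4) : ‖L (Pm e) z‖ ≤ ‖z‖ := by
  have h1 : ⟪L (Pm e) z, L (Pm e) z⟫ = ⟪z, L (Pm e) z⟫ := by
    rw [inner_L_left, ← L_mul, Pm_herm, Pm_idem he]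
  have h2 : ‖L (Pm e) z‖ ^ 2 = Complex.re ⟪z, L (Pm e) z⟫ := by
    rw [← h1]
    have a1 : RCLike.re ⟪L (Pm e) z, L (Pm e) z⟫ = ‖L (Pm e) z‖ ^ 2 := inner_self_eq_norm_sq _
    simp only [RCLike.re_to_complex] at a1
    rw [a1]
  have h3 : Complex.re ⟪z, L (Pm e) z⟫ ≤ ‖z‖ * ‖L (Pm e) z‖ := by
    calc Complex.re ⟪z, L (Pm e) z⟫ ≤ ‖⟪z, L (Pm e) z⟫‖ := Complex.re_le_norm _
      _ = ‖⟪z, L (Pm e) z⟫‖ := rfl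
      _ ≤ ‖z‖ * ‖L (Pm e) z‖ := norm_inner_le_norm _ _
  nlinarith [norm_nonneg (L (Pm e) z), norm_nonneg z]

end DiracAux

namespace DiracAux

open Matrix

set_option maxHeartbeats 2000000

local notation "⟪" x ", " y "⟫" => @inner ℂ C4 _ x y

lemma inner_LP_LP {e : E3} (he : ‖e‖ = 1) (x y : C4) :
    ⟪L (Pm e) x, L (Pm e) y⟫ = ⟪L (Pm e) x, y⟫ := by
  rw [inner_L_right, ← L_mul, Pm_herm, Pm_idem he]

lemma inner_LAP_LP {e : E3} (he : ‖e‖ = 1) (j : Fin 3) (x y : C4) :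
    ⟪L (diracAlpha j * Pm e) x, L (Pm e) y⟫ = ((e j : ℝ) : ℂ) * ⟪L (Pm e) x, y⟫ := by
  rw [inner_L_right, ← L_mul, Pm_herm, ← mul_assoc, PAP he j]
  have : L (((e j : ℝ) : ℂ) • Pm e) x = ((e j : ℝ) : ℂ) • L (Pm e) x := by
    simp [L, Matrix.toEuclideanLin_apply, Matrix.smul_mulVec]
  rw [this, inner_smul_left, Complex.conj_ofReal]

lemma inner_alpha_move (j : Fin 3) (x y : C4) :
    ⟪L (diracAlpha j) x, y⟫ = ⟪x, L (diracAlpha j) y⟫ := by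
  rw [inner_L_left, alpha_herm]

lemma Sm_mul_eq_sum (h : E3) (M : Mx) :
    Sm h * M = ∑ j : Fin 3, ((h j : ℝ) : ℂ) • (diracAlpha j * M) := by
  rw [Sm, Finset.sum_mul]
  simp [Matrix.smul_mul]

lemma L_sum_apply (f : Fin 3 → Mx) (z : C4) :
    L (∑ j, f j) z = ∑ j, L (f j) z := by
  rw [L, map_sum]
  simp

lemma L_smul_apply (c : ℂ) (M : Mx) (z : C4) : L (c • M) z = c • L M z := by
  simp [L, Matrix.toEuclideanLin_apply, Matrix.smul_mulVec]

lemma L_sub_apply (M N : Mx) (z : C4) : L (M - N) z = L M z - L N z := by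
  rw [L, map_sub]
  simp

lemma L_add_apply (M N : Mx) (z : C4) : L (M + N) z = L M z + L N z := by
  rw [L, map_add]
  simp

lemma fact (e₁ e₂ : E3) (he₁ : ‖e₁‖ = 1) (he₂ : ‖e₂‖ = 1) (z₁ z₂ : C4)
    (hz₁ : ‖z₁‖ = 1) (hz₂ : ‖z₂‖ = 1) (g : E3) (hg : g = e₁ ∨ g = e₂) :
    ∃ (a r0 : ℂ) (r : Fin 3 → ℂ),
      ⟪L (diracPi e₁) z₁, L (diracPi e₂) z₂⟫ = a + r0 ∧
      (∀ j, ⟪L (diracAlpha j * diracPi e₁) z₁, L (diracPi e₂) z₂⟫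
          = ((g j : ℝ) : ℂ) * a + r j) ∧
      ‖a‖ ≤ 1 ∧ ‖r0‖ ≤ ‖e₁ - e₂‖ / 2 ∧ (∀ j, ‖r j‖ ≤ ‖e₁ - e₂‖ / 2) ∧
      (∀ h : E3, ‖h‖ = 1 →
        ‖-r0 + ∑ j, ((h j : ℝ) : ℂ) * r j‖ ≤ ‖h - g‖ * (‖e₁ - e₂‖ / 2)) := by
  rcases hg with rfl | rfl
  · -- base point g = e₁
    set D : Mx := ((1/2 : ℂ)) • Sm (e₂ - g) with hD
    have hsplit : diracPi e₂ = Pm g + D := by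
      rw [diracPi_eq he₂, Pm, Pm, hD, Sm_sub]
      module
    have hDnorm : ‖L D z₂‖ = ‖g - e₂‖ / 2 := by
      have hhalf : ‖(1/2 : ℂ)‖ = 1/2 := by norm_num
      rw [hD, L_smul_apply, norm_smul, hhalf, norm_L_Sm, hz₂, mul_one, norm_sub_rev]
      ring
    have hP1 : ‖L (Pm g) z₁‖ ≤ 1 := hz₁ ▸ norm_L_P_le he₁ z₁
    refine ⟨⟪L (Pm g) z₁, z₂⟫, ⟪L (Pm g) z₁, L D z₂⟫,
      fun j => ⟪L (diracAlpha j * Pm g) z₁, L D z₂⟫, ?_, ?_, ?_, ?_, ?_, ?_⟩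
    · rw [diracPi_eq he₁, hsplit, L_add_apply, inner_add_right, inner_LP_LP he₁]
    · intro j
      simp only []
      rw [diracPi_eq he₁, hsplit, L_add_apply, inner_add_right, inner_LAP_LP he₁]
    · calc ‖⟪L (Pm g) z₁, z₂⟫‖ ≤ ‖L (Pm g) z₁‖ * ‖z₂‖ := norm_inner_le_norm _ _
        _ ≤ 1 * 1 := by rw [hz₂]; exact mul_le_mul_of_nonneg_right hP1 zero_le_one
        _ = 1 := one_mul 1
    · calc ‖⟪L (Pm g) z₁, L D z₂⟫‖ ≤ ‖L (Pm g) z₁‖ * ‖L D z₂‖ := norm_inner_le_norm _ _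
        _ ≤ 1 * (‖g - e₂‖ / 2) := by
            rw [hDnorm]; exact mul_le_mul_of_nonneg_right hP1 (by positivity)
        _ = ‖g - e₂‖ / 2 := one_mul _
    · intro j
      simp only []
      have hmv : ‖L (diracAlpha j * Pm g) z₁‖ = ‖L (Pm g) z₁‖ := by
        rw [L_mul, norm_L_alpha]
      calc ‖⟪L (diracAlpha j * Pm g) z₁, L D z₂⟫‖
          ≤ ‖L (diracAlpha j * Pm g) z₁‖ * ‖L D z₂‖ := norm_inner_le_norm _ _
        _ ≤ 1 * (‖g - e₂‖ / 2) := by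
            rw [hDnorm, hmv]; exact mul_le_mul_of_nonneg_right hP1 (by positivity)
        _ = ‖g - e₂‖ / 2 := one_mul _
    · intro h hh
      simp only []
      have hsum : ⟪L (Sm h * Pm g) z₁, L D z₂⟫
          = ∑ j, ((h j : ℝ) : ℂ) * ⟪L (diracAlpha j * Pm g) z₁, L D z₂⟫ := by
        rw [Sm_mul_eq_sum, L_sum_apply, sum_inner]
        refine Finset.sum_congr rfl fun j _ => ?_
        simp only [L_smul_apply, inner_smul_left, inner_smul_right, Complex.conj_ofReal]
      have hexp : (-⟪L (Pm g) z₁, L D z₂⟫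
            + ∑ j, ((h j : ℝ) : ℂ) * ⟪L (diracAlpha j * Pm g) z₁, L D z₂⟫)
          = ⟪L (Sm (h - g) * Pm g) z₁, L D z₂⟫ := by
        rw [← contraction he₁ h, sub_mul, one_mul, L_sub_apply, inner_sub_left, ← hsum]
        ring
      rw [hexp]
      calc ‖⟪L (Sm (h - g) * Pm g) z₁, L D z₂⟫‖
          ≤ ‖L (Sm (h - g) * Pm g) z₁‖ * ‖L D z₂‖ := norm_inner_le_norm _ _
        _ = ‖h - g‖ * ‖L (Pm g) z₁‖ * ‖L D z₂‖ := by rw [L_mul, norm_L_Sm]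
        _ ≤ ‖h - g‖ * 1 * (‖g - e₂‖ / 2) := by
            rw [hDnorm]
            have h1 : (0:ℝ) ≤ ‖h - g‖ := norm_nonneg _
            have h2 : (0:ℝ) ≤ ‖g - e₂‖ / 2 := by positivity
            exact mul_le_mul (mul_le_mul_of_nonneg_left hP1 h1) le_rfl h2
              (by positivity)
        _ = ‖h - g‖ * (‖g - e₂‖ / 2) := by rw [mul_one]
  · -- base point g = e₂
    set D : Mx := ((1/2 : ℂ)) • Sm (e₁ - g) with hD
    have hsplit : diracPi e₁ = Pm g + D := by
      rw [diracPi_eq he₁, Pm, Pm, hD, Sm_sub]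
      module
    have hDnorm : ‖L D z₁‖ = ‖e₁ - g‖ / 2 := by
      have hhalf : ‖(1/2 : ℂ)‖ = 1/2 := by norm_num
      rw [hD, L_smul_apply, norm_smul, hhalf, norm_L_Sm, hz₁, mul_one]
      ring
    have hP2 : ‖L (Pm g) z₂‖ ≤ 1 := hz₂ ▸ norm_L_P_le he₂ z₂
    refine ⟨⟪L (Pm g) z₁, z₂⟫, ⟪L D z₁, L (Pm g) z₂⟫,
      fun j => ⟪L D z₁, L (diracAlpha j * Pm g) z₂⟫, ?_, ?_, ?_, ?_, ?_, ?_⟩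
    · rw [hsplit, diracPi_eq he₂, L_add_apply, inner_add_left]
      congr 1
      calc ⟪L (Pm g) z₁, L (Pm g) z₂⟫ = ⟪L (Pm g) (L (Pm g) z₁), z₂⟫ := by
            rw [inner_L_right, Pm_herm]
        _ = ⟪L (Pm g) z₁, z₂⟫ := by rw [← L_mul, Pm_idem he₂]
    · intro j
      simp only []
      rw [hsplit, diracPi_eq he₂, mul_add, L_add_apply, inner_add_left]
      congr 1
      · exact inner_LAP_LP he₂ j z₁ z₂
      · rw [L_mul, inner_alpha_move, ← L_mul]
    · calc ‖⟪L (Pm g) z₁, z₂⟫‖ ≤ ‖L (Pm g) z₁‖ * ‖z₂‖ := norm_inner_le_norm _ _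
        _ ≤ 1 * 1 := by
            rw [hz₂]
            exact mul_le_mul_of_nonneg_right (hz₁ ▸ norm_L_P_le he₂ z₁) zero_le_one
        _ = 1 := one_mul 1
    · calc ‖⟪L D z₁, L (Pm g) z₂⟫‖ ≤ ‖L D z₁‖ * ‖L (Pm g) z₂‖ := norm_inner_le_norm _ _
        _ ≤ (‖e₁ - g‖ / 2) * 1 := by
            rw [hDnorm]
            exact mul_le_mul_of_nonneg_left hP2 (by positivity)
        _ = ‖e₁ - g‖ / 2 := mul_one _
    · intro j
      simp only []
      have hmv : ‖L (diracAlpha j * Pm g) z₂‖ = ‖L (Pm g) z₂‖ := by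
        rw [L_mul, norm_L_alpha]
      calc ‖⟪L D z₁, L (diracAlpha j * Pm g) z₂⟫‖
          ≤ ‖L D z₁‖ * ‖L (diracAlpha j * Pm g) z₂‖ := norm_inner_le_norm _ _
        _ ≤ (‖e₁ - g‖ / 2) * 1 := by
            rw [hDnorm, hmv]
            exact mul_le_mul_of_nonneg_left hP2 (by positivity)
        _ = ‖e₁ - g‖ / 2 := mul_one _
    · intro h hh
      simp only []
      have hsum : ⟪L D z₁, L (Sm h * Pm g) z₂⟫
          = ∑ j, ((h j : ℝ) : ℂ) * ⟪L D z₁, L (diracAlpha j * Pm g) z₂⟫ := by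
        rw [Sm_mul_eq_sum, L_sum_apply, inner_sum]
        refine Finset.sum_congr rfl fun j _ => ?_
        simp only [L_smul_apply, inner_smul_left, inner_smul_right, Complex.conj_ofReal]
      have hexp : (-⟪L D z₁, L (Pm g) z₂⟫
            + ∑ j, ((h j : ℝ) : ℂ) * ⟪L D z₁, L (diracAlpha j * Pm g) z₂⟫)
          = ⟪L D z₁, L (Sm (h - g) * Pm g) z₂⟫ := by
        rw [← contraction he₂ h, sub_mul, one_mul, L_sub_apply, inner_sub_right, ← hsum]
        ring
      rw [hexp]
      calc ‖⟪L D z₁, L (Sm (h - g) * Pm g) z₂⟫‖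
          ≤ ‖L D z₁‖ * ‖L (Sm (h - g) * Pm g) z₂‖ := norm_inner_le_norm _ _
        _ = ‖L D z₁‖ * (‖h - g‖ * ‖L (Pm g) z₂‖) := by rw [L_mul, norm_L_Sm]
        _ ≤ (‖e₁ - g‖ / 2) * (‖h - g‖ * 1) := by
            rw [hDnorm]
            have h1 : (0:ℝ) ≤ ‖h - g‖ := norm_nonneg _
            exact mul_le_mul_of_nonneg_left
              (mul_le_mul_of_nonneg_left hP2 h1) (by positivity)
        _ = ‖h - g‖ * (‖e₁ - g‖ / 2) := by ring

end DiracAux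

namespace DiracAux

open Matrix InnerProductGeometry

set_option maxHeartbeats 2000000

local notation "⟪" x ", " y "⟫" => @inner ℂ C4 _ x y

lemma one_sub_cos_le (x : ℝ) : 1 - Real.cos x ≤ x ^ 2 / 2 := by
  have h1 : Real.sin (x/2) ^ 2 ≤ (x/2) ^ 2 := Real.sin_sq_le_sq
  have h2 : Real.sin (x/2) ^ 2 = 1 - Real.cos (x/2) ^ 2 := Real.sin_sq (x/2)
  have h3 : Real.cos (x/2) ^ 2 = 1/2 + Real.cos (2 * (x/2)) / 2 := Real.cos_sq (x/2)
  rw [show 2 * (x/2) = x by ring] at h3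
  nlinarith

lemma cos_angle_unit {x y : E3} (hx : ‖x‖ = 1) (hy : ‖y‖ = 1) :
    Real.cos (angle x y) = (inner ℝ x y : ℝ) := by
  rw [cos_angle, hx, hy]
  norm_num

lemma chord_le {x y : E3} (hx : ‖x‖ = 1) (hy : ‖y‖ = 1) : ‖x - y‖ ≤ angle x y := by
  have hsq : ‖x - y‖ ^ 2 = 2 - 2 * Real.cos (angle x y) := by
    rw [norm_sub_sq_real, hx, hy, cos_angle_unit hx hy]
    ring
  have h1 := one_sub_cos_le (angle x y)
  have h2 : ‖x - y‖ ^ 2 ≤ (angle x y) ^ 2 := by nlinarith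
  calc ‖x - y‖ = Real.sqrt (‖x - y‖ ^ 2) := (Real.sqrt_sq (norm_nonneg _)).symm
    _ ≤ Real.sqrt ((angle x y) ^ 2) := Real.sqrt_le_sqrt h2
    _ = angle x y := Real.sqrt_sq (angle_nonneg _ _)

lemma main_term {x y : E3} (hx : ‖x‖ = 1) (hy : ‖y‖ = 1) :
    |(-1 : ℝ) + (inner ℝ x y : ℝ)| ≤ (angle x y) ^ 2 / 2 := by
  have hc := cos_angle_unit hx hy
  have hle : (inner ℝ x y : ℝ) ≤ 1 := by rw [← hc]; exact Real.cos_le_one _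
  rw [abs_of_nonpos (by linarith)]
  have := one_sub_cos_le (angle x y)
  rw [hc] at this
  linarith

lemma key (e₁ e₂ e₃ e₄ : E3) (he₁ : ‖e₁‖ = 1) (he₂ : ‖e₂‖ = 1) (he₃ : ‖e₃‖ = 1)
    (he₄ : ‖e₄‖ = 1) (z₁ z₂ z₃ z₄ : C4) (hz₁ : ‖z₁‖ = 1) (hz₂ : ‖z₂‖ = 1)
    (hz₃ : ‖z₃‖ = 1) (hz₄ : ‖z₄‖ = 1) (g h : E3)
    (hg : g = e₁ ∨ g = e₂) (hh : h = e₃ ∨ h = e₄) :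
    ‖(-(⟪L (diracPi e₁) z₁, L (diracPi e₂) z₂⟫ * ⟪L (diracPi e₃) z₃, L (diracPi e₄) z₄⟫) +
        ∑ j : Fin 3, ⟪L (diracAlpha j * diracPi e₁) z₁, L (diracPi e₂) z₂⟫ *
          ⟪L (diracAlpha j * diracPi e₃) z₃, L (diracPi e₄) z₄⟫)‖ ≤
      angle e₁ e₂ * angle e₃ e₄ + angle g h * max (angle e₁ e₂) (angle e₃ e₄) +
        (angle g h) ^ 2 := by
  have hgu : ‖g‖ = 1 := by rcases hg with rfl | rfl <;> assumption
  have hhu : ‖h‖ = 1 := by rcases hh with rfl | rfl <;> assumption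
  obtain ⟨a, r0, r, c0, cj, ha, hr0, hrj, hcon⟩ :=
    fact e₁ e₂ he₁ he₂ z₁ z₂ hz₁ hz₂ g hg
  obtain ⟨b, s0, s, d0, dj, hb, hs0, hsj, hcon'⟩ :=
    fact e₃ e₄ he₃ he₄ z₃ z₄ hz₃ hz₄ h hh
  set c : ℂ := ((-1 + (inner ℝ g h : ℝ) : ℝ) : ℂ) with hcdef
  set X : ℂ := -s0 + ∑ j, ((g j : ℝ) : ℂ) * s j with hXdef
  set Y : ℂ := -r0 + ∑ j, ((h j : ℝ) : ℂ) * r j with hYdef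
  set W : ℂ := -(r0 * s0) + ∑ j, r j * s j with hWdef
  have hQ : (-(⟪L (diracPi e₁) z₁, L (diracPi e₂) z₂⟫ *
          ⟪L (diracPi e₃) z₃, L (diracPi e₄) z₄⟫) +
        ∑ j : Fin 3, ⟪L (diracAlpha j * diracPi e₁) z₁, L (diracPi e₂) z₂⟫ *
          ⟪L (diracAlpha j * diracPi e₃) z₃, L (diracPi e₄) z₄⟫)
      = a * b * c + a * X + b * Y + W := by
    rw [c0, d0]
    simp only [cj, dj, hcdef, hXdef, hYdef, hWdef, inner_eq_sum, Fin.sum_univ_three]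
    push_cast
    ring
  rw [hQ]
  -- individual bounds
  have hc : ‖c‖ ≤ (angle g h) ^ 2 / 2 := by
    rw [hcdef, Complex.norm_real]
    exact main_term hgu hhu
  have hX : ‖X‖ ≤ angle g h * (angle e₃ e₄ / 2) := by
    calc ‖X‖ ≤ ‖g - h‖ * (‖e₃ - e₄‖ / 2) := hcon' g hgu
      _ ≤ angle g h * (angle e₃ e₄ / 2) := by
          apply mul_le_mul (chord_le hgu hhu)
            (by have := chord_le he₃ he₄; linarith) (by positivity) (angle_nonneg _ _)
  have hY : ‖Y‖ ≤ angle g h * (angle e₁ e₂ / 2) := by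
    calc ‖Y‖ ≤ ‖h - g‖ * (‖e₁ - e₂‖ / 2) := hcon h hhu
      _ ≤ angle g h * (angle e₁ e₂ / 2) := by
          rw [norm_sub_rev]
          apply mul_le_mul (chord_le hgu hhu)
            (by have := chord_le he₁ he₂; linarith) (by positivity) (angle_nonneg _ _)
  have hW : ‖W‖ ≤ angle e₁ e₂ * angle e₃ e₄ := by
    have hd12 : ‖e₁ - e₂‖ / 2 ≤ angle e₁ e₂ / 2 := by
      have := chord_le he₁ he₂; linarith
    have hd34 : ‖e₃ - e₄‖ / 2 ≤ angle e₃ e₄ / 2 := by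
      have := chord_le he₃ he₄; linarith
    have hp : ∀ (u v : ℂ), ‖u‖ ≤ ‖e₁ - e₂‖ / 2 → ‖v‖ ≤ ‖e₃ - e₄‖ / 2 →
        ‖u * v‖ ≤ (angle e₁ e₂ / 2) * (angle e₃ e₄ / 2) := by
      intro u v hu hv
      rw [norm_mul]
      have h1 : ‖u‖ ≤ angle e₁ e₂ / 2 := hu.trans hd12
      have h2 : ‖v‖ ≤ angle e₃ e₄ / 2 := hv.trans hd34
      exact mul_le_mul h1 h2 (norm_nonneg _) (by have := angle_nonneg e₁ e₂; linarith)
    have p0 := hp r0 s0 hr0 hs0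
    have p1 := hp (r 0) (s 0) (hrj 0) (hsj 0)
    have p2 := hp (r 1) (s 1) (hrj 1) (hsj 1)
    have p3 := hp (r 2) (s 2) (hrj 2) (hsj 2)
    have htri : ‖W‖ ≤ ‖r0 * s0‖ + (‖r 0 * s 0‖ + ‖r 1 * s 1‖ + ‖r 2 * s 2‖) := by
      rw [hWdef, Fin.sum_univ_three]
      calc ‖-(r0 * s0) + (r 0 * s 0 + r 1 * s 1 + r 2 * s 2)‖
          ≤ ‖-(r0 * s0)‖ + ‖r 0 * s 0 + r 1 * s 1 + r 2 * s 2‖ := norm_add_le _ _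
        _ ≤ ‖-(r0 * s0)‖ + (‖r 0 * s 0 + r 1 * s 1‖ + ‖r 2 * s 2‖) := by
            gcongr; exact norm_add_le _ _
        _ ≤ ‖-(r0 * s0)‖ + (‖r 0 * s 0‖ + ‖r 1 * s 1‖ + ‖r 2 * s 2‖) := by
            gcongr; exact norm_add_le _ _
        _ = ‖r0 * s0‖ + (‖r 0 * s 0‖ + ‖r 1 * s 1‖ + ‖r 2 * s 2‖) := by rw [norm_neg]
    have hang12 : 0 ≤ angle e₁ e₂ := angle_nonneg _ _
    have hang34 : 0 ≤ angle e₃ e₄ := angle_nonneg _ _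
    nlinarith
  -- combine
  have t1 : ‖a * b * c‖ ≤ (angle g h) ^ 2 / 2 := by
    rw [norm_mul, norm_mul]
    calc ‖a‖ * ‖b‖ * ‖c‖ ≤ 1 * 1 * ((angle g h) ^ 2 / 2) := by
          gcongr
      _ = (angle g h) ^ 2 / 2 := by ring
  have t2 : ‖a * X‖ ≤ angle g h * (angle e₃ e₄ / 2) := by
    rw [norm_mul]
    calc ‖a‖ * ‖X‖ ≤ 1 * (angle g h * (angle e₃ e₄ / 2)) := by gcongr
      _ = _ := one_mul _
  have t3 : ‖b * Y‖ ≤ angle g h * (angle e₁ e₂ / 2) := by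
    rw [norm_mul]
    calc ‖b‖ * ‖Y‖ ≤ 1 * (angle g h * (angle e₁ e₂ / 2)) := by gcongr
      _ = _ := one_mul _
  have htri2 : ‖a * b * c + a * X + b * Y + W‖
      ≤ ‖a * b * c‖ + ‖a * X‖ + ‖b * Y‖ + ‖W‖ := by
    calc ‖a * b * c + a * X + b * Y + W‖
        ≤ ‖a * b * c + a * X + b * Y‖ + ‖W‖ := norm_add_le _ _
      _ ≤ ‖a * b * c + a * X‖ + ‖b * Y‖ + ‖W‖ := by gcongr; exact norm_add_le _ _
      _ ≤ ‖a * b * c‖ + ‖a * X‖ + ‖b * Y‖ + ‖W‖ := by gcongr; exact norm_add_le _ _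
  have hm1 : angle e₁ e₂ ≤ max (angle e₁ e₂) (angle e₃ e₄) := le_max_left _ _
  have hm2 : angle e₃ e₄ ≤ max (angle e₁ e₂) (angle e₃ e₄) := le_max_right _ _
  have hth : 0 ≤ angle g h := angle_nonneg _ _
  have hmul1 : angle g h * (angle e₃ e₄ / 2) ≤
      angle g h * (max (angle e₁ e₂) (angle e₃ e₄) / 2) := by
    gcongr
  have hmul2 : angle g h * (angle e₁ e₂ / 2) ≤
      angle g h * (max (angle e₁ e₂) (angle e₃ e₄) / 2) := by
    gcongr
  have hsq : (angle g h) ^ 2 / 2 ≤ (angle g h) ^ 2 := by nlinarith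
  linarith

end DiracAux


/-- The quadrilinear null-form estimate: with `θ_{jk}` the angle between `e_j` and `e_k`
and `φ = min{θ₁₃, θ₁₄, θ₂₃, θ₂₄}`, the quantity
`q = Σ_{μ=0}^3 ⟨α^μ Π(e₁)z₁, Π(e₂)z₂⟩⟨α_μ Π(e₃)z₃, Π(e₄)z₄⟩`
(i.e. `q = −⟨Π(e₁)z₁,Π(e₂)z₂⟩⟨Π(e₃)z₃,Π(e₄)z₄⟩ + Σ_j ⟨αʲΠ(e₁)z₁,Π(e₂)z₂⟩⟨αʲΠ(e₃)z₃,Π(e₄)z₄⟩`)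
satisfies `|q| ≲ θ₁₂θ₃₄ + φ·max(θ₁₂,θ₃₄) + φ²`. -/
theorem quadrilinear_null_structure :
    ∃ C : ℝ, 0 < C ∧
      ∀ (e₁ e₂ e₃ e₄ : E3), ‖e₁‖ = 1 → ‖e₂‖ = 1 → ‖e₃‖ = 1 → ‖e₄‖ = 1 →
      ∀ (z₁ z₂ z₃ z₄ : C4), ‖z₁‖ = 1 → ‖z₂‖ = 1 → ‖z₃‖ = 1 → ‖z₄‖ = 1 →
        ‖(-((inner ℂ ((Matrix.toEuclideanLin (diracPi e₁)) z₁)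
                ((Matrix.toEuclideanLin (diracPi e₂)) z₂) : ℂ) *
             (inner ℂ ((Matrix.toEuclideanLin (diracPi e₃)) z₃)
                ((Matrix.toEuclideanLin (diracPi e₄)) z₄) : ℂ)) +
           ∑ j : Fin 3,
             (inner ℂ ((Matrix.toEuclideanLin (diracAlpha j * diracPi e₁)) z₁)
                ((Matrix.toEuclideanLin (diracPi e₂)) z₂) : ℂ) *
             (inner ℂ ((Matrix.toEuclideanLin (diracAlpha j * diracPi e₃)) z₃)
                ((Matrix.toEuclideanLin (diracPi e₄)) z₄) : ℂ))‖ ≤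
          C * (angle e₁ e₂ * angle e₃ e₄ +
            min (min (angle e₁ e₃) (angle e₁ e₄)) (min (angle e₂ e₃) (angle e₂ e₄)) *
              max (angle e₁ e₂) (angle e₃ e₄) +
            min (min (angle e₁ e₃) (angle e₁ e₄)) (min (angle e₂ e₃) (angle e₂ e₄)) ^ 2) := by
  exact ⟨1, one_pos, by
    intro e₁ e₂ e₃ e₄ he₁ he₂ he₃ he₄ z₁ z₂ z₃ z₄ hz₁ hz₂ hz₃ hz₄
    rw [one_mul]
    rcases min_cases (min (angle e₁ e₃) (angle e₁ e₄)) (min (angle e₂ e₃) (angle e₂ e₄)) with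
      ⟨h1, -⟩ | ⟨h1, -⟩
    · rcases min_cases (angle e₁ e₃) (angle e₁ e₄) with ⟨h2, -⟩ | ⟨h2, -⟩
      · rw [h1, h2]
        exact DiracAux.key e₁ e₂ e₃ e₄ he₁ he₂ he₃ he₄ z₁ z₂ z₃ z₄ hz₁ hz₂ hz₃ hz₄ e₁ e₃
          (Or.inl rfl) (Or.inl rfl)
      · rw [h1, h2]
        exact DiracAux.key e₁ e₂ e₃ e₄ he₁ he₂ he₃ he₄ z₁ z₂ z₃ z₄ hz₁ hz₂ hz₃ hz₄ e₁ e₄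
          (Or.inl rfl) (Or.inr rfl)
    · rcases min_cases (angle e₂ e₃) (angle e₂ e₄) with ⟨h2, -⟩ | ⟨h2, -⟩
      · rw [h1, h2]
        exact DiracAux.key e₁ e₂ e₃ e₄ he₁ he₂ he₃ he₄ z₁ z₂ z₃ z₄ hz₁ hz₂ hz₃ hz₄ e₂ e₃
          (Or.inr rfl) (Or.inl rfl)
      · rw [h1, h2]
        exact DiracAux.key e₁ e₂ e₃ e₄ he₁ he₂ he₃ he₄ z₁ z₂ z₃ z₄ hz₁ hz₂ hz₃ hz₄ e₂ e₄
          (Or.inr rfl) (Or.inr rfl)⟩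


end
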